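/- In the setting of the previous minimization (p prime, α_1 ≥ ⋯ ≥ α_N ≥ 1, D ∈ ℕ, V_p(ᾱ,D) := min over n̄ ∈ ℕ^N with |n̄| ≤ D of ∑_i ν_p(α_i, n_i)): V_p(ᾱ, D) > 0 if and only if D < ∑_{i=1}^N (p^{α_i} − 1). -/

import Mathlib

theorem stmt_13 (p : ℕ) (hp : p.Prime) (N : ℕ) (hN : 0 < N)
    (α : Fin N → ℕ) (hpos : ∀ i, 0 < α i)
    (hmono : ∀ i j : Fin N, i ≤ j → α j ≤ α i)
    (D : ℕ)
    (νp : ℕ → ℕ → ℕ∞)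
    (hν : ∀ a n : ℕ, νp a n
      = if n ≤ p ^ a - 1 then ((a - padicValNat p (n + 1) : ℕ) : ℕ∞) else ⊤) :
    0 < sInf {v : ℕ∞ | ∃ n : Fin N → ℕ, ∑ i, n i ≤ D ∧ v = ∑ i, νp (α i) (n i)}
      ↔ D < ∑ i, (p ^ α i - 1) := by
  haveI : Fact p.Prime := ⟨hp⟩
  set S : Set ℕ∞ := {v : ℕ∞ | ∃ n : Fin N → ℕ, ∑ i, n i ≤ D ∧ v = ∑ i, νp (α i) (n i)}
    with hS
  have key : (0 : ℕ∞) ∈ S ↔ ∑ i, (p ^ α i - 1) ≤ D := by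
    constructor
    · rintro ⟨n, hn, h0⟩
      refine le_trans (Finset.sum_le_sum ?_) hn
      intro i _
      have hi := (Finset.sum_eq_zero_iff).1 h0.symm i (Finset.mem_univ i)
      rw [hν] at hi
      by_cases hc : n i ≤ p ^ α i - 1
      · rw [if_pos hc] at hi
        have h1 : α i - padicValNat p (n i + 1) = 0 := by exact_mod_cast hi
        have h2 : α i ≤ padicValNat p (n i + 1) := Nat.le_of_sub_eq_zero h1
        have h3 : p ^ α i ∣ n i + 1 :=
          dvd_trans (pow_dvd_pow p h2) (pow_padicValNat_dvd)
        have h4 : p ^ α i ≤ n i + 1 := Nat.le_of_dvd (Nat.succ_pos _) h3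
        omega
      · rw [if_neg hc] at hi
        exact absurd hi (by simp)
    · intro hD
      refine ⟨fun i => p ^ α i - 1, hD, ?_⟩
      symm
      apply Finset.sum_eq_zero
      intro i _
      rw [hν, if_pos le_rfl]
      have hpow : p ^ α i - 1 + 1 = p ^ α i :=
        Nat.succ_pred_eq_of_pos (pow_pos hp.pos _)
      rw [hpow, padicValNat.prime_pow]
      simp
  have inf0 : sInf S = 0 ↔ (0 : ℕ∞) ∈ S := by
    constructor
    · intro h
      by_contra h0
      have : (1 : ℕ∞) ≤ sInf S := by
        refine le_sInf fun v hv => ?_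
        have : v ≠ 0 := fun hv0 => h0 (hv0 ▸ hv)
        exact ENat.one_le_iff_ne_zero.2 this
      rw [h] at this
      exact absurd this (by simp)
    · intro h
      exact le_antisymm (sInf_le h) zero_le
  rw [pos_iff_ne_zero, ← not_le]
  constructor
  · intro h hle
    exact h (inf0.2 (key.2 hle))
  · intro h h0
    exact h (key.1 (inf0.1 h0))
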